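/- Under max-min relay selection among n relays with i.i.d. Exp(1) two-hop channel gains, the CDF of the selected relay's first-hop channel gain |h_{AC}|², conditioned on symmetry, is P(|h_{AC}|² < x) = ∫_0^x n e^{-t}(2e^{-t} - e^{-x})(1 - e^{-2t})^{n-1} dt. -/

import Mathlib

section MMRSAux
open MeasureTheory ProbabilityTheory Real Set intervalIntegral
open scoped ENNReal
set_option linter.unusedSectionVars false
set_option maxHeartbeats 1000000

namespace MMRS


lemma expM_apply {s : Set ℝ} (hs : MeasurableSet s) :
    expMeasure 1 s = ∫⁻ y in s, exponentialPDF 1 y := by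
  rw [expMeasure, gammaMeasure, withDensity_apply _ hs]; rfl

instance : IsProbabilityMeasure (expMeasure 1) := isProbabilityMeasure_expMeasure one_pos

lemma expM_Iic {t : ℝ} : expMeasure 1 (Iic t) = ENNReal.ofReal (1 - exp (-t)) ∨ True := by
  right; trivial

lemma expM_Iic' (t : ℝ) (ht : 0 ≤ t) :
    expMeasure 1 (Iic t) = ENNReal.ofReal (1 - exp (-t)) := by
  rw [expM_apply measurableSet_Iic, lintegral_exponentialPDF_eq_antiDeriv one_pos, if_pos ht,
    one_mul]

lemma expM_singleton (t : ℝ) : expMeasure 1 {t} = 0 := by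
  rw [expM_apply (measurableSet_singleton t)]
  simp [Measure.restrict_singleton]

lemma expM_Iio (t : ℝ) (ht : 0 ≤ t) :
    expMeasure 1 (Iio t) = ENNReal.ofReal (1 - exp (-t)) := by
  have : Iic t = Iio t ∪ {t} := by ext y; simp [le_iff_lt_or_eq]
  have h := expM_Iic' t ht
  rw [this] at h
  have h2 : expMeasure 1 (Iio t ∪ {t}) = expMeasure 1 (Iio t) := by
    refine le_antisymm ?_ (measure_mono subset_union_left)
    calc expMeasure 1 (Iio t ∪ {t}) ≤ expMeasure 1 (Iio t) + expMeasure 1 {t} :=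
          measure_union_le _ _
    _ = expMeasure 1 (Iio t) := by rw [expM_singleton t, add_zero]
  rwa [h2] at h

lemma expM_Iio_nonpos (t : ℝ) (ht : t ≤ 0) : expMeasure 1 (Iio t) = 0 := by
  rw [expM_apply measurableSet_Iio]
  exact lintegral_exponentialPDF_of_nonpos ht

lemma expM_Ici (t : ℝ) (ht : 0 ≤ t) : expMeasure 1 (Ici t) = ENNReal.ofReal (exp (-t)) := by
  have h1 : expMeasure 1 (Ici t) = 1 - expMeasure 1 (Iio t) := by
    rw [← prob_compl_eq_one_sub measurableSet_Iio]; congr 1; ext y; simp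
  rw [h1, expM_Iio t ht, ENNReal.sub_eq_of_eq_add (by simp)]
  rw [← ENNReal.ofReal_add (exp_pos _).le (by simp [exp_le_one_iff]; positivity)]
  norm_num






lemma lintegral_expM {f : ℝ → ℝ≥0∞} (hf : Measurable f) :
    ∫⁻ t, f t ∂(expMeasure 1) = ∫⁻ t, (gammaPDF 1 1 * f) t := by
  rw [expMeasure, gammaMeasure, lintegral_withDensity_eq_lintegral_mul _
    (show Measurable (gammaPDF 1 1) from (measurable_gammaPDFReal 1 1).ennreal_ofReal) hf]

noncomputable def gfun (x : ℝ) (m : ℕ) : ℝ × ℝ → ℝ≥0∞ := fun a =>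
  if a.1 < x then ENNReal.ofReal ((1 - Real.exp (-(2 * min a.1 a.2))) ^ m) else 0

noncomputable def Ffun (m : ℕ) (t : ℝ) : ℝ := (1 - exp (-(2 * t))) ^ m
noncomputable def wfun (m : ℕ) (t : ℝ) : ℝ := exp (-t) * Ffun m t
noncomputable def Wfun (m : ℕ) (h : ℝ) : ℝ := ∫ t in (0:ℝ)..h, wfun m t

lemma Ffun_cont (m : ℕ) : Continuous (Ffun m) := by
  unfold Ffun; fun_prop

lemma Ffun_nonneg (m : ℕ) {t : ℝ} (ht : 0 ≤ t) : 0 ≤ Ffun m t := by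
  unfold Ffun
  apply pow_nonneg
  simp only [sub_nonneg, exp_le_one_iff, Left.neg_nonpos_iff]
  positivity

lemma wfun_cont (m : ℕ) : Continuous (wfun m) := by
  unfold wfun Ffun; fun_prop

lemma wfun_nonneg (m : ℕ) {t : ℝ} (ht : 0 ≤ t) : 0 ≤ wfun m t :=
  mul_nonneg (exp_pos _).le (Ffun_nonneg m ht)

lemma Wfun_hasDerivAt (m : ℕ) (h : ℝ) : HasDerivAt (Wfun m) (wfun m h) h := by
  exact intervalIntegral.integral_hasDerivAt_right
    ((wfun_cont m).intervalIntegrable _ _)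
    ((wfun_cont m).measurable.stronglyMeasurable.stronglyMeasurableAtFilter)
    (wfun_cont m).continuousAt

lemma Wfun_cont (m : ℕ) : Continuous (Wfun m) :=
  continuous_iff_continuousAt.2 fun h =>
    (Wfun_hasDerivAt m h).differentiableAt.continuousAt

lemma Wfun_nonneg (m : ℕ) {h : ℝ} (hh : 0 ≤ h) : 0 ≤ Wfun m h := by
  apply intervalIntegral.integral_nonneg hh
  intro t ht
  exact wfun_nonneg m ht.1

lemma inner_eq (m : ℕ) {h : ℝ} (hh : 0 ≤ h) :
    ∫⁻ t, ENNReal.ofReal ((1 - exp (-(2 * min h t))) ^ m) ∂(expMeasure 1)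
      = ENNReal.ofReal (Wfun m h + exp (-h) * Ffun m h) := by
  have hmeas : Measurable fun t : ℝ => ENNReal.ofReal ((1 - exp (-(2 * min h t))) ^ m) := by
    fun_prop
  rw [expMeasure, gammaMeasure,
    lintegral_withDensity_eq_lintegral_mul _
    (show Measurable (gammaPDF 1 1) from (measurable_gammaPDFReal 1 1).ennreal_ofReal) hmeas]
  have hsplit0 : (∫⁻ t in Iio 0, (gammaPDF 1 1 * fun t =>
        ENNReal.ofReal ((1 - exp (-(2 * min h t))) ^ m)) t)
      + (∫⁻ t in Ici 0, (gammaPDF 1 1 * fun t =>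
        ENNReal.ofReal ((1 - exp (-(2 * min h t))) ^ m)) t)
      = ∫⁻ t, (gammaPDF 1 1 * fun t =>
        ENNReal.ofReal ((1 - exp (-(2 * min h t))) ^ m)) t := by
    have := lintegral_add_compl (μ := volume) ((gammaPDF 1 1) * fun t =>
      ENNReal.ofReal ((1 - exp (-(2 * min h t))) ^ m)) (measurableSet_Iio (a := (0:ℝ)))
    rwa [compl_Iio] at this
  rw [← hsplit0]
  have hIio : (∫⁻ t in Iio 0, (gammaPDF 1 1 * fun t =>
      ENNReal.ofReal ((1 - exp (-(2 * min h t))) ^ m)) t) = 0 := by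
    rw [setLIntegral_congr_fun measurableSet_Iio (fun t (ht : t < 0) => ?_),
      lintegral_zero]
    rw [Pi.mul_apply, gammaPDF_of_neg ht, zero_mul]
  have hIci : Ici (0:ℝ) = Ico 0 h ∪ Ici h := by
    rw [Ico_union_Ici_eq_Ici hh]
  have hdisj : Disjoint (Ico (0:ℝ) h) (Ici h) := by
    apply disjoint_left.2
    rintro t ⟨_, h2⟩ h3
    exact absurd h3 (not_le.2 h2)
  rw [hIio, zero_add, hIci, lintegral_union measurableSet_Ici hdisj]
  have hIco : (∫⁻ t in Ico 0 h, (gammaPDF 1 1 * fun t =>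
      ENNReal.ofReal ((1 - exp (-(2 * min h t))) ^ m)) t) = ENNReal.ofReal (Wfun m h) := by
    rw [setLIntegral_congr_fun measurableSet_Ico
      (fun t (ht : t ∈ Ico 0 h) => ?_)]
    · rw [← ofReal_integral_eq_lintegral_ofReal]
      · rw [Wfun, intervalIntegral.integral_of_le hh, integral_Ioc_eq_integral_Ioo,
          ← integral_Ico_eq_integral_Ioo]
      · exact ((wfun_cont m).integrableOn_Icc).mono_set Ico_subset_Icc_self
      · exact (ae_restrict_iff' measurableSet_Ico).2 (ae_of_all _ fun t ht =>
          wfun_nonneg m ht.1)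
    · rw [Pi.mul_apply]
      have h1 : gammaPDF 1 1 t = ENNReal.ofReal (exp (-t)) := by
        have h2 := exponentialPDF_of_nonneg (r := 1) ht.1
        rw [one_mul, one_mul] at h2
        exact h2
      rw [h1, min_eq_right ht.2.le]
      rw [← ENNReal.ofReal_mul (exp_pos _).le]
      rfl
  have hIcih : (∫⁻ t in Ici h, (gammaPDF 1 1 * fun t =>
      ENNReal.ofReal ((1 - exp (-(2 * min h t))) ^ m)) t)
      = ENNReal.ofReal (exp (-h) * Ffun m h) := by
    rw [setLIntegral_congr_fun measurableSet_Ici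
      (fun t (ht : h ≤ t) => ?_)]
    · rw [lintegral_mul_const _
        (show Measurable (exponentialPDF 1) from (measurable_gammaPDFReal 1 1).ennreal_ofReal),
        ← expM_apply measurableSet_Ici, expM_Ici h hh,
        ← ENNReal.ofReal_mul (exp_pos _).le]
    · rw [Pi.mul_apply, min_eq_left ht]
      rfl
  rw [hIco, hIcih,
    ← ENNReal.ofReal_add (Wfun_nonneg m hh) (mul_nonneg (exp_pos _).le (Ffun_nonneg m hh))]

lemma gfun_meas (x : ℝ) (m : ℕ) : Measurable (gfun x m) := by
  unfold gfun
  refine Measurable.ite (measurableSet_lt measurable_fst measurable_const) ?_ measurable_const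
  fun_prop

lemma outer_eq (x : ℝ) (hx : 0 ≤ x) (m : ℕ) :
    ∫⁻ a, gfun x m a ∂((expMeasure 1).prod (expMeasure 1))
      = ENNReal.ofReal (∫ h in (0:ℝ)..x, exp (-h) * (Wfun m h + exp (-h) * Ffun m h)) := by
  rw [MeasureTheory.lintegral_prod _ (gfun_meas x m).aemeasurable]
  have hin : ∀ h : ℝ, 0 ≤ h → (∫⁻ t, gfun x m (h, t) ∂(expMeasure 1))
      = if h < x then ENNReal.ofReal (Wfun m h + exp (-h) * Ffun m h) else 0 := by
    intro h hh
    by_cases hhx : h < x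
    · rw [if_pos hhx]
      have : ∀ t : ℝ, gfun x m (h, t)
          = ENNReal.ofReal ((1 - exp (-(2 * min h t))) ^ m) := by
        intro t; simp [gfun, hhx]
      simp_rw [this]
      exact inner_eq m hh
    · rw [if_neg hhx]
      have : ∀ t : ℝ, gfun x m (h, t) = 0 := by
        intro t; simp [gfun, hhx]
      simp_rw [this, lintegral_zero]
  -- outer integral over exp measure
  have houter_meas : Measurable fun h => ∫⁻ t, gfun x m (h, t) ∂(expMeasure 1) :=
    (gfun_meas x m).lintegral_prod_right'
  rw [lintegral_expM houter_meas]
  have hsplit0 := lintegral_add_compl (μ := volume) ((gammaPDF 1 1) * fun h =>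
    ∫⁻ t, gfun x m (h, t) ∂(expMeasure 1)) (measurableSet_Iio (a := (0:ℝ)))
  rw [compl_Iio] at hsplit0
  rw [← hsplit0]
  have hIio : (∫⁻ h in Iio 0, (gammaPDF 1 1 * fun h =>
      ∫⁻ t, gfun x m (h, t) ∂(expMeasure 1)) h) = 0 := by
    rw [setLIntegral_congr_fun measurableSet_Iio (fun h (hh : h < 0) => ?_),
      lintegral_zero]
    rw [Pi.mul_apply, gammaPDF_of_neg hh, zero_mul]
  have hIci : Ici (0:ℝ) = Ico 0 x ∪ Ici x := by rw [Ico_union_Ici_eq_Ici hx]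
  have hdisj : Disjoint (Ico (0:ℝ) x) (Ici x) := by
    apply disjoint_left.2
    rintro t ⟨_, h2⟩ h3
    exact absurd h3 (not_le.2 h2)
  rw [hIio, zero_add, hIci, lintegral_union measurableSet_Ici hdisj]
  have hIcix : (∫⁻ h in Ici x, (gammaPDF 1 1 * fun h =>
      ∫⁻ t, gfun x m (h, t) ∂(expMeasure 1)) h) = 0 := by
    rw [setLIntegral_congr_fun measurableSet_Ici (fun h (hh : x ≤ h) => ?_),
      lintegral_zero]
    rw [Pi.mul_apply, hin h (hx.trans hh), if_neg (not_lt.2 hh), mul_zero]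
  rw [hIcix, add_zero]
  have hcw : Continuous fun h => exp (-h) * (Wfun m h + exp (-h) * Ffun m h) := by
    have := Wfun_cont m
    have := Ffun_cont m
    fun_prop
  have hnn : ∀ h : ℝ, 0 ≤ h → 0 ≤ exp (-h) * (Wfun m h + exp (-h) * Ffun m h) := by
    intro h hh
    exact mul_nonneg (exp_pos _).le (add_nonneg (Wfun_nonneg m hh)
      (mul_nonneg (exp_pos _).le (Ffun_nonneg m hh)))
  rw [setLIntegral_congr_fun measurableSet_Ico (fun h (hh : h ∈ Ico 0 x) => ?_)]
  · rw [← ofReal_integral_eq_lintegral_ofReal]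
    · rw [intervalIntegral.integral_of_le hx, integral_Ioc_eq_integral_Ioo,
        ← integral_Ico_eq_integral_Ioo]
    · exact (hcw.integrableOn_Icc).mono_set Ico_subset_Icc_self
    · exact (ae_restrict_iff' measurableSet_Ico).2 (ae_of_all _ fun h hh => hnn h hh.1)
  · rw [Pi.mul_apply, hin h hh.1, if_pos hh.2]
    have h1 : gammaPDF 1 1 h = ENNReal.ofReal (exp (-h)) := by
      have h2 := exponentialPDF_of_nonneg (r := 1) hh.1
      rw [one_mul, one_mul] at h2
      exact h2
    rw [h1, ← ENNReal.ofReal_mul (exp_pos _).le]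




lemma key (m : ℕ) (x : ℝ) :
    ∫ h in (0:ℝ)..x, exp (-h) * (Wfun m h + exp (-h) * Ffun m h)
      = ∫ t in (0:ℝ)..x, exp (-t) * (2 * exp (-t) - exp (-x)) * Ffun m t := by
  have hFc := Ffun_cont m
  have hWc := Wfun_cont m
  have ie : Continuous fun h : ℝ => exp (-h) := by fun_prop
  have i1 : IntervalIntegrable (fun h => exp (-h) * Wfun m h) volume 0 x :=
    (ie.mul hWc).intervalIntegrable _ _
  have i2 : IntervalIntegrable (fun h => exp (-h) * (exp (-h) * Ffun m h)) volume 0 x :=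
    (ie.mul (ie.mul hFc)).intervalIntegrable _ _
  have i3 : IntervalIntegrable (wfun m) volume 0 x := (wfun_cont m).intervalIntegrable _ _
  have hibp : ∫ h in (0:ℝ)..x, Wfun m h * exp (-h)
      = Wfun m x * (-exp (-x)) - Wfun m 0 * (-exp (-0))
        - ∫ h in (0:ℝ)..x, wfun m h * (-exp (-h)) := by
    refine intervalIntegral.integral_mul_deriv_eq_deriv_mul (u := Wfun m) (u' := wfun m)
      (v := fun h => -exp (-h)) (v' := fun h => exp (-h)) (fun h _ => Wfun_hasDerivAt m h)
      (fun h _ => ?_) i3 (ie.intervalIntegrable _ _)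
    have h1 : HasDerivAt (fun h : ℝ => exp (-h)) (exp (-h) * (-1)) h :=
      ((hasDerivAt_id h).neg).exp
    have h2 := h1.neg
    simp only [mul_neg, mul_one, neg_neg] at h2
    exact h2
  have hW0 : Wfun m 0 = 0 := intervalIntegral.integral_same
  have t1 : (∫ h in (0:ℝ)..x, Wfun m h * exp (-h))
      = ∫ h in (0:ℝ)..x, exp (-h) * Wfun m h :=
    intervalIntegral.integral_congr (fun h _ => by ring)
  have t2 : (∫ h in (0:ℝ)..x, wfun m h * (-exp (-h)))
      = -∫ h in (0:ℝ)..x, exp (-h) * (exp (-h) * Ffun m h) := by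
    rw [← intervalIntegral.integral_neg]
    exact intervalIntegral.integral_congr (fun h _ => by unfold wfun; ring)
  rw [t1, t2, hW0] at hibp
  have e1 : (∫ h in (0:ℝ)..x, exp (-h) * (Wfun m h + exp (-h) * Ffun m h))
      = (∫ h in (0:ℝ)..x, exp (-h) * Wfun m h)
        + ∫ h in (0:ℝ)..x, exp (-h) * (exp (-h) * Ffun m h) := by
    rw [← intervalIntegral.integral_add i1 i2]
    exact intervalIntegral.integral_congr (fun h _ => by ring)
  have e2 : (∫ t in (0:ℝ)..x, exp (-t) * (2 * exp (-t) - exp (-x)) * Ffun m t)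
      = 2 * (∫ h in (0:ℝ)..x, exp (-h) * (exp (-h) * Ffun m h))
        - exp (-x) * ∫ h in (0:ℝ)..x, wfun m h := by
    rw [← intervalIntegral.integral_const_mul, ← intervalIntegral.integral_const_mul,
      ← intervalIntegral.integral_sub (i2.const_mul 2) (i3.const_mul _)]
    exact intervalIntegral.integral_congr (fun t _ => by unfold wfun; ring)
  have hWx : (∫ h in (0:ℝ)..x, wfun m h) = Wfun m x := rfl
  rw [e1, e2, hWx]
  linarith [hibp]

lemma calc3 (n : ℕ) (x : ℝ) :
    (n : ℝ) * ∫ h in (0:ℝ)..x, exp (-h) * (Wfun (n-1) h + exp (-h) * Ffun (n-1) h)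
      = ∫ t in (0:ℝ)..x,
          (n : ℝ) * exp (-t) * (2 * exp (-t) - exp (-x)) * (1 - exp (-2 * t)) ^ (n-1) := by
  rw [key, ← intervalIntegral.integral_const_mul]
  refine intervalIntegral.integral_congr (fun t _ => ?_)
  unfold Ffun
  rw [show -(2 * t) = -2 * t by ring]
  ring



variable {Ω : Type*} [MeasurableSpace Ω] {μ : Measure Ω} [IsProbabilityMeasure μ]
  {n : ℕ} {H G : Fin n → Ω → ℝ}

lemma pair_iIndep (hH : ∀ k, Measurable (H k)) (hG : ∀ k, Measurable (G k))
    (hindep : iIndepFun (Sum.elim H G) μ) :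
    iIndepFun (fun j ω => (H j ω, G j ω)) μ := by
  classical
  rw [iIndepFun_iff_iIndep]
  set ps : Fin n → Set (Set Ω) := fun j =>
    {t | ∃ A : Set ℝ, MeasurableSet A ∧ ∃ B : Set ℝ, MeasurableSet B ∧
      t = H j ⁻¹' A ∩ G j ⁻¹' B} with hps
  have h_ind : iIndepSets ps μ := by
    rw [iIndepSets_iff]
    intro s f hf
    have h' : ∀ j, ∃ A : Set ℝ, MeasurableSet A ∧ ∃ B : Set ℝ, MeasurableSet B ∧
        (j ∈ s → f j = H j ⁻¹' A ∩ G j ⁻¹' B) := by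
      intro j
      by_cases hj : j ∈ s
      · obtain ⟨A, hA, B, hB, hfj⟩ := hf j hj
        exact ⟨A, hA, B, hB, fun _ => hfj⟩
      · exact ⟨univ, MeasurableSet.univ, univ, MeasurableSet.univ, fun h => absurd h hj⟩
    choose A hA B hB hE using h'
    have key := hindep.measure_inter_preimage_eq_mul (s.disjSum s)
      (sets := Sum.elim A B) (fun i _ => by cases i <;> simp [hA, hB])
    have hset : (⋂ j ∈ s, f j) = ⋂ i ∈ s.disjSum s, (Sum.elim H G i) ⁻¹' (Sum.elim A B i) := by
      ext ω
      simp only [Set.mem_iInter]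
      constructor
      · rintro h (j | j) hi
        · obtain ⟨a, ha, hc⟩ | ⟨a, ha, hc⟩ := Finset.mem_disjSum.1 hi
          · obtain rfl := Sum.inl.inj hc
            exact ((hE a ha) ▸ h a ha).1
          · exact absurd hc (by simp)
        · obtain ⟨a, ha, hc⟩ | ⟨a, ha, hc⟩ := Finset.mem_disjSum.1 hi
          · exact absurd hc (by simp)
          · obtain rfl := Sum.inr.inj hc
            exact ((hE a ha) ▸ h a ha).2
      · intro h j hj
        rw [hE j hj]
        exact ⟨h (Sum.inl j) (Finset.inl_mem_disjSum.2 hj),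
          h (Sum.inr j) (Finset.inr_mem_disjSum.2 hj)⟩
    rw [hset, key, Finset.prod_disjSum, ← Finset.prod_mul_distrib]
    refine (Finset.prod_congr rfl fun j hj => ?_).symm
    rw [hE j hj]
    have hind : IndepFun (H j) (G j) μ :=
      hindep.indepFun (show (Sum.inl j : Fin n ⊕ Fin n) ≠ Sum.inr j by simp)
    exact (hind.measure_inter_preimage_eq_mul _ _ (hA j) (hB j))
  refine iIndepSets.iIndep (m := fun j => MeasurableSpace.comap (fun ω => (H j ω, G j ω))
      inferInstance)
    (fun j => Measurable.comap_le ((hH j).prodMk (hG j))) ps ?_ ?_ h_ind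
  · rintro j t1 ⟨A1, hA1, B1, hB1, rfl⟩ t2 ⟨A2, hA2, B2, hB2, rfl⟩ _
    exact ⟨A1 ∩ A2, hA1.inter hA2, B1 ∩ B2, hB1.inter hB2, by
      simp only [preimage_inter]; ext ω; simp; tauto⟩
  · intro j
    have h1 : (inferInstance : MeasurableSpace (ℝ × ℝ)) =
        MeasurableSpace.generateFrom (Set.image2 (· ×ˢ ·) {s : Set ℝ | MeasurableSet s}
          {t : Set ℝ | MeasurableSet t}) := generateFrom_prod.symm
    show MeasurableSpace.comap (fun ω => (H j ω, G j ω)) inferInstance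
        = MeasurableSpace.generateFrom (ps j)
    rw [h1, MeasurableSpace.comap_generateFrom]
    congr 1
    ext t
    constructor
    · rintro ⟨u, ⟨A, hA, B, hB, rfl⟩, rfl⟩
      exact ⟨A, hA, B, hB, by ext ω; simp [Set.mem_prod]⟩
    · rintro ⟨A, hA, B, hB, rfl⟩
      exact ⟨A ×ˢ B, ⟨A, hA, B, hB, rfl⟩, by ext ω; simp [Set.mem_prod]⟩




variable {Ω : Type*} [MeasurableSpace Ω] {μ : Measure Ω} [IsProbabilityMeasure μ]
  {n : ℕ} {H G : Fin n → Ω → ℝ}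


section lemmas

variable (hH : ∀ k, Measurable (H k)) (hG : ∀ k, Measurable (G k))
    (hindep : iIndepFun (Sum.elim H G) μ)
    (hdist : ∀ s : Fin n ⊕ Fin n, Measure.map (Sum.elim H G s) μ = expMeasure 1)

include hH hG hindep in
lemma M_iIndep :
    iIndepFun (fun j ω => min (H j ω) (G j ω)) μ := by
  have := (pair_iIndep hH hG hindep).comp (fun _ p => min p.1 p.2)
    (fun _ => measurable_fst.min measurable_snd)
  exact this

include hH hG hdist in
lemma H_Iio (j : Fin n) (c : ℝ) : μ (H j ⁻¹' Iio c) = expMeasure 1 (Iio c) := by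
  rw [← Measure.map_apply (hH j) measurableSet_Iio]
  exact congrFun (congrArg _ (hdist (Sum.inl j))) _

include hH hG hdist in
lemma G_Iio (j : Fin n) (c : ℝ) : μ (G j ⁻¹' Iio c) = expMeasure 1 (Iio c) := by
  rw [← Measure.map_apply (hG j) measurableSet_Iio]
  exact congrFun (congrArg _ (hdist (Sum.inr j))) _

include hH hG hindep hdist in
lemma M_cdf (j : Fin n) (c : ℝ) (hc : 0 ≤ c) :
    μ ((fun ω => min (H j ω) (G j ω)) ⁻¹' Iio c) = ENNReal.ofReal (1 - exp (-(2 * c))) := by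
  have hmin : Measurable (fun ω => min (H j ω) (G j ω)) := (hH j).min (hG j)
  have hcompl : ((fun ω => min (H j ω) (G j ω)) ⁻¹' Iio c)ᶜ = H j ⁻¹' Ici c ∩ G j ⁻¹' Ici c := by
    ext ω; simp [le_min_iff]
  have hind : IndepFun (H j) (G j) μ :=
    hindep.indepFun (show (Sum.inl j : Fin n ⊕ Fin n) ≠ Sum.inr j by simp)
  have hd1 := hdist (Sum.inl j); rw [Sum.elim_inl] at hd1
  have hd2 := hdist (Sum.inr j); rw [Sum.elim_inr] at hd2
  have h1 : μ (H j ⁻¹' Ici c) = ENNReal.ofReal (exp (-c)) := by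
    rw [← Measure.map_apply (hH j) measurableSet_Ici, hd1]
    exact expM_Ici c hc
  have h2 : μ (G j ⁻¹' Ici c) = ENNReal.ofReal (exp (-c)) := by
    rw [← Measure.map_apply (hG j) measurableSet_Ici, hd2]
    exact expM_Ici c hc
  have := hind.measure_inter_preimage_eq_mul (Ici c) (Ici c) measurableSet_Ici measurableSet_Ici
  have hco : μ (((fun ω => min (H j ω) (G j ω)) ⁻¹' Iio c)ᶜ) = ENNReal.ofReal (exp (-(2*c))) := by
    rw [hcompl, this, h1, h2, ← ENNReal.ofReal_mul (exp_pos _).le, ← exp_add]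
    ring_nf
  have hm : MeasurableSet ((fun ω => min (H j ω) (G j ω)) ⁻¹' Iio c) :=
    hmin measurableSet_Iio
  rw [← compl_compl ((fun ω => min (H j ω) (G j ω)) ⁻¹' Iio c),
    prob_compl_eq_one_sub hm.compl, hco, ← ENNReal.ofReal_one,
    ← ENNReal.ofReal_sub _ (exp_pos _).le]

include hH hG hdist in
lemma M_cdf_nonpos (j : Fin n) (c : ℝ) (hc : c ≤ 0) :
    μ ((fun ω => min (H j ω) (G j ω)) ⁻¹' Iio c) = 0 := by
  have hsub : (fun ω => min (H j ω) (G j ω)) ⁻¹' Iio c ⊆ H j ⁻¹' Iio c ∪ G j ⁻¹' Iio c := by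
    intro ω hω; simp only [mem_preimage, mem_Iio, min_lt_iff] at hω
    rcases hω with h | h
    · exact Or.inl h
    · exact Or.inr h
  refine measure_mono_null hsub (measure_union_null ?_ ?_)
  · rw [H_Iio hH hG hdist j c]; exact expM_Iio_nonpos c hc
  · rw [G_Iio hH hG hdist j c]; exact expM_Iio_nonpos c hc

include hH hG hindep hdist in
lemma M_prod_cdf (k : Fin n) (c : ℝ) (hc : 0 ≤ c) :
    μ (⋂ j ∈ Finset.univ.erase k, (fun ω => min (H j ω) (G j ω)) ⁻¹' Iio c)
      = ENNReal.ofReal ((1 - exp (-(2 * c))) ^ (n - 1)) := by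
  have key := (M_iIndep hH hG hindep).measure_inter_preimage_eq_mul (Finset.univ.erase k)
    (sets := fun _ => Iio c) (fun _ _ => measurableSet_Iio)
  rw [key]
  have hcard : (Finset.univ.erase k).card = n - 1 := by
    rw [Finset.card_erase_of_mem (Finset.mem_univ k), Finset.card_univ, Fintype.card_fin]
  rw [Finset.prod_congr rfl (fun j _ => M_cdf hH hG hindep hdist j c hc),
    Finset.prod_const, hcard, ← ENNReal.ofReal_pow]
  have : 0 ≤ 1 - exp (-(2*c)) := by
    simp only [sub_nonneg, exp_le_one_iff, Left.neg_nonpos_iff]; positivity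
  exact this












include hH hG hdist in
lemma M_atom (j : Fin n) (c : ℝ) : μ ((fun ω => min (H j ω) (G j ω)) ⁻¹' {c}) = 0 := by
  have hsub : (fun ω => min (H j ω) (G j ω)) ⁻¹' {c} ⊆ H j ⁻¹' {c} ∪ G j ⁻¹' {c} := by
    intro ω hω
    simp only [mem_preimage, mem_singleton_iff] at hω
    rcases min_choice (H j ω) (G j ω) with h | h <;> rw [h] at hω
    · exact Or.inl hω
    · exact Or.inr hω
  refine measure_mono_null hsub (measure_union_null ?_ ?_)
  · have hd := hdist (Sum.inl j); rw [Sum.elim_inl] at hd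
    rw [← Measure.map_apply (hH j) (measurableSet_singleton c), hd]
    exact expM_singleton c
  · have hd := hdist (Sum.inr j); rw [Sum.elim_inr] at hd
    rw [← Measure.map_apply (hG j) (measurableSet_singleton c), hd]
    exact expM_singleton c

include hH hG hindep hdist in
lemma tie_null (i j : Fin n) (hij : i ≠ j) :
    μ {ω | min (H i ω) (G i ω) = min (H j ω) (G j ω)} = 0 := by
  have hMi : Measurable (fun ω => min (H i ω) (G i ω)) := (hH i).min (hG i)
  have hMj : Measurable (fun ω => min (H j ω) (G j ω)) := (hH j).min (hG j)
  have hind : IndepFun (fun ω => min (H i ω) (G i ω)) (fun ω => min (H j ω) (G j ω)) μ :=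
    (M_iIndep hH hG hindep).indepFun hij
  have hmap := (indepFun_iff_map_prod_eq_prod_map_map hMi.aemeasurable hMj.aemeasurable).1 hind
  have hdiag : MeasurableSet {p : ℝ × ℝ | p.1 = p.2} :=
    measurableSet_eq_fun measurable_fst measurable_snd
  have h1 : {ω | min (H i ω) (G i ω) = min (H j ω) (G j ω)} =
      (fun ω => (min (H i ω) (G i ω), min (H j ω) (G j ω))) ⁻¹' {p : ℝ × ℝ | p.1 = p.2} := rfl
  rw [h1, ← Measure.map_apply (hMi.prodMk hMj) hdiag, hmap, Measure.prod_apply hdiag]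
  have : ∀ a : ℝ, (Measure.map (fun ω => min (H j ω) (G j ω)) μ)
      (Prod.mk a ⁻¹' {p : ℝ × ℝ | p.1 = p.2}) = 0 := by
    intro a
    have : Prod.mk a ⁻¹' {p : ℝ × ℝ | p.1 = p.2} = {a} := by
      ext b; simp [eq_comm]
    rw [this, Measure.map_apply hMj (measurableSet_singleton a)]
    exact M_atom hH hG hdist j a
  simp only [this, lintegral_zero]

include hH hG hindep hdist in
lemma eventk (x : ℝ) (k : Fin n) :
    μ {ω | H k ω < x ∧ ∀ j, j ≠ k → min (H j ω) (G j ω) < min (H k ω) (G k ω)}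
      = ∫⁻ a, gfun x (n - 1) a ∂((expMeasure 1).prod (expMeasure 1)) := by
  classical
  set T : Finset (Fin n) := Finset.univ.erase k with hT
  set tup : Ω → ({y // y ∈ T} → ℝ × ℝ) := fun ω j => (H j.1 ω, G j.1 ω) with htupdef
  have htup : Measurable tup :=
    measurable_pi_lambda _ (fun j => (hH j.1).prodMk (hG j.1))
  have hPk : Measurable (fun ω => (H k ω, G k ω)) := (hH k).prodMk (hG k)
  -- independence of (H k, G k) and tup
  have hfin := (pair_iIndep hH hG hindep).indepFun_finset {k} T
    (Finset.disjoint_singleton_left.2 (Finset.notMem_erase k _))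
    (fun j => (hH j).prodMk (hG j))
  have hIF : IndepFun (fun ω => (H k ω, G k ω)) tup μ := by
    have := hfin.comp (φ := fun v : ({y // y ∈ ({k} : Finset (Fin n))} → ℝ × ℝ) =>
        v ⟨k, Finset.mem_singleton_self k⟩) (ψ := id)
        (measurable_pi_apply (X := fun _ : ({k} : Finset (Fin n)) => ℝ × ℝ) _) measurable_id
    exact this
  have hmap := (indepFun_iff_map_prod_eq_prod_map_map hPk.aemeasurable htup.aemeasurable).1 hIF
  have hindHG : IndepFun (H k) (G k) μ :=
    hindep.indepFun (show (Sum.inl k : Fin n ⊕ Fin n) ≠ Sum.inr k by simp)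
  have hmapPk : Measure.map (fun ω => (H k ω, G k ω)) μ = (expMeasure 1).prod (expMeasure 1) := by
    have := (indepFun_iff_map_prod_eq_prod_map_map (hH k).aemeasurable
      (hG k).aemeasurable).1 hindHG
    rw [this]
    have hd1 := hdist (Sum.inl k); rw [Sum.elim_inl] at hd1
    have hd2 := hdist (Sum.inr k); rw [Sum.elim_inr] at hd2
    rw [hd1, hd2]
  set E : Set ((ℝ × ℝ) × ({y // y ∈ T} → ℝ × ℝ)) :=
    {q | q.1.1 < x ∧ ∀ j, min (q.2 j).1 (q.2 j).2 < min q.1.1 q.1.2} with hE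
  have hEm : MeasurableSet E := by
    have h1 : E = {q : (ℝ × ℝ) × ({y // y ∈ T} → ℝ × ℝ) | q.1.1 < x} ∩
        ⋂ j, {q : (ℝ × ℝ) × ({y // y ∈ T} → ℝ × ℝ) |
          min (q.2 j).1 (q.2 j).2 < min q.1.1 q.1.2} := by
      ext q; simp [hE]
    rw [h1]
    exact (measurableSet_lt measurable_fst.fst measurable_const).inter
      (MeasurableSet.iInter fun j => measurableSet_lt
        (((measurable_pi_apply j).comp measurable_snd).fst.min
          ((measurable_pi_apply j).comp measurable_snd).snd)
        (measurable_fst.fst.min measurable_fst.snd))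
  have hpre : {ω | H k ω < x ∧ ∀ j, j ≠ k → min (H j ω) (G j ω) < min (H k ω) (G k ω)}
      = (fun ω => ((H k ω, G k ω), tup ω)) ⁻¹' E := by
    ext ω
    simp only [mem_setOf_eq, mem_preimage, hE, htupdef]
    constructor
    · rintro ⟨h1, h2⟩
      exact ⟨h1, fun j => h2 j.1 (Finset.ne_of_mem_erase j.2)⟩
    · rintro ⟨h1, h2⟩
      refine ⟨h1, fun j hj => ?_⟩
      exact h2 ⟨j, Finset.mem_erase.2 ⟨hj, Finset.mem_univ j⟩⟩
  have hslice_meas : ∀ c : ℝ, MeasurableSet {v : {y // y ∈ T} → ℝ × ℝ |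
      ∀ j, min (v j).1 (v j).2 < c} := by
    intro c
    have h1 : {v : {y // y ∈ T} → ℝ × ℝ | ∀ j, min (v j).1 (v j).2 < c}
        = ⋂ j, {v : {y // y ∈ T} → ℝ × ℝ | min (v j).1 (v j).2 < c} := by
      ext v; simp
    rw [h1]
    exact MeasurableSet.iInter fun j => measurableSet_lt
      ((measurable_pi_apply j).fst.min (measurable_pi_apply j).snd) measurable_const
  have hnull : ((expMeasure 1).prod (expMeasure 1)) {a : ℝ × ℝ | a.1 < 0 ∨ a.2 < 0} = 0 := by
    have hsub : {a : ℝ × ℝ | a.1 < 0 ∨ a.2 < 0} ⊆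
        (Iio 0 ×ˢ univ) ∪ (univ ×ˢ Iio 0) := by
      rintro a (h | h)
      · exact Or.inl ⟨h, mem_univ _⟩
      · exact Or.inr ⟨mem_univ _, h⟩
    refine measure_mono_null hsub (measure_union_null ?_ ?_)
    · rw [Measure.prod_prod, expM_Iio_nonpos 0 le_rfl, zero_mul]
    · rw [Measure.prod_prod, expM_Iio_nonpos 0 le_rfl, mul_zero]
  have hae0 : ∀ᵐ a ∂((expMeasure 1).prod (expMeasure 1)), 0 ≤ a.1 ∧ 0 ≤ a.2 := by
    rw [ae_iff]
    convert hnull using 2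
    ext a
    simp only [mem_setOf_eq, not_and_or, not_le]
  have hae : ∀ᵐ a ∂((expMeasure 1).prod (expMeasure 1)),
      (Measure.map tup μ) (Prod.mk a ⁻¹' E) = gfun x (n - 1) a := by
    filter_upwards [hae0] with a ha
    by_cases hax : a.1 < x
    · have hslice : Prod.mk a ⁻¹' E = {v : {y // y ∈ T} → ℝ × ℝ |
          ∀ j, min (v j).1 (v j).2 < min a.1 a.2} := by
        ext v; simp [hE, hax]
      rw [hslice, Measure.map_apply htup (hslice_meas _)]
      have hpre2 : tup ⁻¹' {v : {y // y ∈ T} → ℝ × ℝ | ∀ j, min (v j).1 (v j).2 < min a.1 a.2}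
          = ⋂ j ∈ T, (fun ω => min (H j ω) (G j ω)) ⁻¹' Iio (min a.1 a.2) := by
        ext ω
        simp only [mem_preimage, mem_setOf_eq, mem_iInter, mem_Iio, htupdef, Subtype.forall]
      rw [hpre2, hT, M_prod_cdf hH hG hindep hdist k _ (le_min ha.1 ha.2)]
      simp [gfun, hax]
    · have hslice : Prod.mk a ⁻¹' E = ∅ := by
        ext v; simp [hE, hax]
      rw [hslice]
      simp [gfun, hax]
  rw [hpre, ← Measure.map_apply (hPk.prodMk htup) hEm, hmap, Measure.prod_apply hEm, hmapPk]
  exact lintegral_congr_ae hae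




end lemmas

end MMRS

end MMRSAux



open MeasureTheory ProbabilityTheory Real intervalIntegral

/-- Under max-min relay selection among `n` relays with i.i.d. Exp(1) two-hop channel gains
`H k, G k`, the CDF of the selected relay's first-hop gain is
`P(|h_AC|² < x) = ∫_0^x n e^(-t) (2 e^(-t) - e^(-x)) (1 - e^(-2t))^(n-1) dt`. -/
theorem mmrs_first_hop_cdf
    {Ω : Type*} [MeasurableSpace Ω] (μ : Measure Ω) [IsProbabilityMeasure μ]
    (n : ℕ) (hn : 1 ≤ n) (H G : Fin n → Ω → ℝ)
    (hH : ∀ k, Measurable (H k)) (hG : ∀ k, Measurable (G k))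
    (hindep : iIndepFun (Sum.elim H G) μ)
    (hdist : ∀ s : Fin n ⊕ Fin n, Measure.map (Sum.elim H G s) μ = expMeasure 1)
    (C : Ω → Fin n) (hC : Measurable C)
    (hsel : ∀ ω, ∀ k, min (H k ω) (G k ω) ≤ min (H (C ω) ω) (G (C ω) ω)) :
    ∀ x : ℝ, 0 ≤ x →
      (μ {ω | H (C ω) ω < x}).toReal =
        ∫ t in (0:ℝ)..x,
          n * Real.exp (-t) * (2 * Real.exp (-t) - Real.exp (-x))
            * (1 - Real.exp (-2 * t)) ^ (n - 1) := by
  intro x hx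
  classical
  set Ev : Fin n → Set Ω := fun k =>
    {ω | H k ω < x ∧ ∀ j, j ≠ k → min (H j ω) (G j ω) < min (H k ω) (G k ω)} with hEv
  have hEvMeas : ∀ k, MeasurableSet (Ev k) := by
    intro k
    have h1 : Ev k = {ω | H k ω < x} ∩ ⋂ j, ⋂ (_ : j ≠ k),
        {ω | min (H j ω) (G j ω) < min (H k ω) (G k ω)} := by
      ext ω
      simp only [hEv, Set.mem_setOf_eq, Set.mem_inter_iff, Set.mem_iInter]
    rw [h1]
    exact (measurableSet_lt (hH k) measurable_const).inter
      (MeasurableSet.iInter fun j => MeasurableSet.iInter fun _ =>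
        measurableSet_lt ((hH j).min (hG j)) ((hH k).min (hG k)))
  have hdisj : Pairwise (Function.onFun Disjoint Ev) := by
    intro k l hkl
    refine Set.disjoint_left.2 ?_
    rintro ω ⟨h1k, h2k⟩ ⟨h1l, h2l⟩
    exact lt_asymm (h2l k hkl) (h2k l hkl.symm)
  have hsub1 : (⋃ k, Ev k) ⊆ {ω | H (C ω) ω < x} := by
    intro ω hω
    obtain ⟨k, h1, h2⟩ := Set.mem_iUnion.1 hω
    have hCk : C ω = k := by
      by_contra hne
      exact lt_irrefl _ (lt_of_le_of_lt (hsel ω k) (h2 (C ω) hne))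
    show H (C ω) ω < x
    rw [hCk]; exact h1
  have hties : μ (⋃ i, ⋃ j, ⋃ (_ : i ≠ j),
      {ω | min (H i ω) (G i ω) = min (H j ω) (G j ω)}) = 0 :=
    measure_iUnion_null fun i => measure_iUnion_null fun j => measure_iUnion_null fun hij =>
      MMRS.tie_null hH hG hindep hdist i j hij
  have hsub2 : {ω | H (C ω) ω < x} ⊆ (⋃ k, Ev k) ∪
      (⋃ i, ⋃ j, ⋃ (_ : i ≠ j), {ω | min (H i ω) (G i ω) = min (H j ω) (G j ω)}) := by
    intro ω hω
    by_cases hall : ∀ j, j ≠ C ω → min (H j ω) (G j ω) < min (H (C ω) ω) (G (C ω) ω)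
    · exact Or.inl (Set.mem_iUnion.2 ⟨C ω, hω, hall⟩)
    · push_neg at hall
      obtain ⟨j, hjne, hjle⟩ := hall
      have heq : min (H j ω) (G j ω) = min (H (C ω) ω) (G (C ω) ω) :=
        le_antisymm (hsel ω j) hjle
      exact Or.inr (Set.mem_iUnion.2 ⟨j, Set.mem_iUnion.2 ⟨C ω,
        Set.mem_iUnion.2 ⟨hjne, heq⟩⟩⟩)
  have hmeq : μ {ω | H (C ω) ω < x} = μ (⋃ k, Ev k) := by
    refine le_antisymm ?_ (measure_mono hsub1)
    calc μ {ω | H (C ω) ω < x}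
        ≤ μ ((⋃ k, Ev k) ∪ (⋃ i, ⋃ j, ⋃ (_ : i ≠ j),
            {ω | min (H i ω) (G i ω) = min (H j ω) (G j ω)})) := measure_mono hsub2
      _ ≤ μ (⋃ k, Ev k) + μ (⋃ i, ⋃ j, ⋃ (_ : i ≠ j),
            {ω | min (H i ω) (G i ω) = min (H j ω) (G j ω)}) := measure_union_le _ _
      _ = μ (⋃ k, Ev k) := by rw [hties, add_zero]
  have hLI : ∀ k : Fin n, μ (Ev k) = ∫⁻ a, MMRS.gfun x (n - 1) a
      ∂((expMeasure 1).prod (expMeasure 1)) :=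
    fun k => MMRS.eventk hH hG hindep hdist x k
  have hsum : μ (⋃ k, Ev k) = (n : ENNReal) * ∫⁻ a, MMRS.gfun x (n - 1) a
      ∂((expMeasure 1).prod (expMeasure 1)) := by
    rw [measure_iUnion hdisj hEvMeas, tsum_fintype, Finset.sum_congr rfl fun k _ => hLI k,
      Finset.sum_const, Finset.card_univ, Fintype.card_fin, nsmul_eq_mul]
  have hInn : 0 ≤ ∫ h in (0:ℝ)..x,
      Real.exp (-h) * (MMRS.Wfun (n - 1) h + Real.exp (-h) * MMRS.Ffun (n - 1) h) := by
    refine intervalIntegral.integral_nonneg hx fun h hh => ?_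
    exact mul_nonneg (Real.exp_pos _).le (add_nonneg (MMRS.Wfun_nonneg _ hh.1)
      (mul_nonneg (Real.exp_pos _).le (MMRS.Ffun_nonneg _ hh.1)))
  rw [hmeq, hsum, MMRS.outer_eq x hx (n - 1), ENNReal.toReal_mul, ENNReal.toReal_natCast,
    ENNReal.toReal_ofReal hInn]
  exact MMRS.calc3 n x
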